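/- arXiv:1010.0556 — 8 statements merged into one kernel-verified Lean document; each statement's English description precedes it below -/
import Mathlib

section
/- Let Λ be a nonempty subset of (0,∞)ⁿ. For β ∈ ℝⁿ, the equality Ω(β|Λ) = ‖β‖₁ holds if and only if the vector |β| = (|β₁|,…,|βₙ|) belongs to the closure of Λ. -/
open Filter Topology

theorem stmt_3 (n : ℕ) (Λ : Set (Fin n → ℝ)) (hne : Λ.Nonempty)
    (hpos : ∀ l ∈ Λ, ∀ i, 0 < l i) (β : Fin n → ℝ) :
    sInf {t : ℝ | ∃ l ∈ Λ, t = (1/2) * ∑ i, (β i ^ 2 / l i + l i)} = ∑ i, |β i| ↔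
      (fun i => |β i|) ∈ closure Λ := by
  set S := {t : ℝ | ∃ l ∈ Λ, t = (1/2) * ∑ i, (β i ^ 2 / l i + l i)} with hSdef
  set B := ∑ i, |β i| with hBdef
  have hBnn : 0 ≤ B := Finset.sum_nonneg fun i _ => abs_nonneg _
  have hcoord : ∀ l ∈ Λ, ∀ i, 2 * |β i| ≤ β i ^ 2 / l i + l i := by
    intro l hl i
    have hli := hpos l hl i
    have h1 : 2 * |β i| * l i ≤ β i ^ 2 + l i * l i := by
      nlinarith [sq_nonneg (l i - |β i|), sq_abs (β i)]
    have h2 : β i ^ 2 / l i + l i = (β i ^ 2 + l i * l i) / l i := by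
      field_simp
    rw [h2, le_div_iff₀ hli]
    exact h1
  have hlb : ∀ t ∈ S, B ≤ t := by
    rintro t ⟨l, hl, rfl⟩
    have hs : ∑ i, 2 * |β i| ≤ ∑ i, (β i ^ 2 / l i + l i) :=
      Finset.sum_le_sum fun i _ => hcoord l hl i
    have h2 : ∑ i, 2 * |β i| = 2 * B := by rw [hBdef, Finset.mul_sum]
    linarith
  have hSne : S.Nonempty := by
    obtain ⟨l0, hl0⟩ := hne
    exact ⟨_, l0, hl0, rfl⟩
  have hbdd : BddBelow S := ⟨B, hlb⟩
  constructor
  · intro h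
    rw [Metric.mem_closure_iff]
    intro ε hε
    set δ := min 1 (ε ^ 2 / (2 * (2 * B + 2))) with hδdef
    have hδpos : 0 < δ := lt_min one_pos (by positivity)
    have hδ1 : δ ≤ 1 := min_le_left _ _
    have hδ2 : δ * (2 * (2 * B + 2)) ≤ ε ^ 2 :=
      (le_div_iff₀ (by positivity)).mp (min_le_right _ _)
    obtain ⟨t, htS, htlt⟩ := Real.lt_sInf_add_pos hSne hδpos
    obtain ⟨l, hl, rfl⟩ := htS
    rw [h] at htlt
    refine ⟨l, hl, ?_⟩
    rw [dist_pi_lt_iff hε]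
    intro i
    have hli := hpos l hl i
    have habsB : |β i| ≤ B :=
      Finset.single_le_sum (f := fun j => |β j|) (fun j _ => abs_nonneg _) (Finset.mem_univ i)
    have hterm : β i ^ 2 / l i + l i - 2 * |β i| ≤ ∑ j, (β j ^ 2 / l j + l j) - 2 * B := by
      have h1 : ∑ j, (β j ^ 2 / l j + l j - 2 * |β j|)
          = ∑ j, (β j ^ 2 / l j + l j) - 2 * B := by
        rw [Finset.sum_sub_distrib, hBdef, Finset.mul_sum]
      have h2 := Finset.single_le_sum
        (f := fun j => β j ^ 2 / l j + l j - 2 * |β j|)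
        (fun j _ => by have := hcoord l hl j; linarith) (Finset.mem_univ i)
      linarith
    have he : β i ^ 2 / l i + l i - 2 * |β i| < 2 * δ := by linarith
    have hdivnn : 0 ≤ β i ^ 2 / l i := div_nonneg (sq_nonneg _) hli.le
    have hlibnd : l i < 2 * B + 2 * δ := by linarith
    have h3 : (l i - |β i|) ^ 2 = (β i ^ 2 / l i + l i - 2 * |β i|) * l i := by
      field_simp
      nlinarith [sq_abs (β i)]
    have hsq : (l i - |β i|) ^ 2 < ε ^ 2 := by
      rw [h3]
      nlinarith
    rw [Real.dist_eq]
    rw [abs_lt]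
    constructor <;> nlinarith [hsq, hε]
  · intro h
    have hge : B ≤ sInf S := le_csInf hSne hlb
    have hle : sInf S ≤ B := by
      obtain ⟨x, hx, hxt⟩ := mem_closure_iff_seq_limit.mp h
      have hsum : Tendsto (fun k => ∑ i, (β i ^ 2 / x k i + x k i)) atTop
          (𝓝 (∑ i, 2 * |β i|)) := by
        apply tendsto_finset_sum
        intro i _
        have hxi : Tendsto (fun k => x k i) atTop (𝓝 (|β i|)) :=
          ((continuous_apply i).continuousAt.tendsto).comp hxt
        by_cases hb : β i = 0
        · simpa [hb] using hxi
        · have habs : |β i| ≠ 0 := abs_ne_zero.mpr hb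
          have hdiv : Tendsto (fun k => β i ^ 2 / x k i) atTop (𝓝 (β i ^ 2 / |β i|)) :=
            tendsto_const_nhds.div hxi habs
          have heq : β i ^ 2 / |β i| + |β i| = 2 * |β i| := by
            rw [show β i ^ 2 = |β i| ^ 2 from (sq_abs _).symm, sq, mul_div_assoc,
              div_self habs, mul_one]; ring
          have := hdiv.add hxi
          rwa [heq] at this
      have hf : Tendsto (fun k => (1/2 : ℝ) * ∑ i, (β i ^ 2 / x k i + x k i)) atTop (𝓝 B) := by
        have := hsum.const_mul (1/2 : ℝ)
        have heq : (1/2 : ℝ) * ∑ i, 2 * |β i| = B := by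
          rw [hBdef, Finset.mul_sum]
          exact Finset.sum_congr rfl fun i _ => by ring
        rwa [heq] at this
      exact ge_of_tendsto' hf fun k => csInf_le hbdd ⟨x k, hx k, rfl⟩
    linarith
end

section
/- If Λ ⊆ (0,∞)ⁿ is a nonempty convex cone (closed under multiplication by positive scalars and convex), then the function β ↦ Ω(β|Λ) = inf{(1/2) Σᵢ (βᵢ²/λᵢ + λᵢ) : λ ∈ Λ} is a norm on ℝⁿ: it is nonnegative, vanishes only at 0, is absolutely homogeneous, and satisfies the triangle inequality. -/
open Pointwise

noncomputable def Omega {n : ℕ} (Λ : Set (Fin n → ℝ)) (β : Fin n → ℝ) : ℝ :=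
  sInf {t : ℝ | ∃ l ∈ Λ, t = (1/2) * ∑ i, (β i ^ 2 / l i + l i)}

private lemma key_amgm (b l : ℝ) (hl : 0 < l) : 2 * |b| ≤ b ^ 2 / l + l := by
  rw [div_add' _ _ _ hl.ne', le_div_iff₀ hl]
  nlinarith [sq_nonneg (|b| - l), sq_abs b]

private lemma key_cs (a b x y : ℝ) (hx : 0 < x) (hy : 0 < y) :
    (a + b) ^ 2 / (x + y) ≤ a ^ 2 / x + b ^ 2 / y := by
  rw [div_add_div _ _ hx.ne' hy.ne', div_le_div_iff₀ (by positivity) (by positivity)]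
  nlinarith [sq_nonneg (a * y - b * x), mul_pos hx hy]

private lemma term_fwd (c b x : ℝ) (hc : c ≠ 0) (hx : 0 < x) :
    |c| * (b ^ 2 / (|c|⁻¹ * x) + |c|⁻¹ * x) = (c * b) ^ 2 / x + x := by
  have h : (0:ℝ) < |c| := abs_pos.mpr hc
  field_simp
  linear_combination b ^ 2 * sq_abs c

private lemma term_bwd (c b x : ℝ) (hc : c ≠ 0) (hx : 0 < x) :
    |c| * (b ^ 2 / x + x) = (c * b) ^ 2 / (|c| * x) + |c| * x := by
  have h : (0:ℝ) < |c| := abs_pos.mpr hc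
  field_simp
  linear_combination b ^ 2 * sq_abs c

theorem stmt_4 (n : ℕ) (Λ : Set (Fin n → ℝ)) (hne : Λ.Nonempty)
    (hpos : ∀ l ∈ Λ, ∀ i, 0 < l i) (hconv : Convex ℝ Λ)
    (hcone : ∀ l ∈ Λ, ∀ t : ℝ, 0 < t → t • l ∈ Λ) :
    (∀ β, 0 ≤ Omega Λ β) ∧
    (∀ β, Omega Λ β = 0 ↔ β = 0) ∧
    (∀ (c : ℝ) (β : Fin n → ℝ), Omega Λ (c • β) = |c| * Omega Λ β) ∧
    (∀ β γ : Fin n → ℝ, Omega Λ (β + γ) ≤ Omega Λ β + Omega Λ γ) := by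
  set S : (Fin n → ℝ) → Set ℝ :=
    fun β => {t : ℝ | ∃ l ∈ Λ, t = (1/2) * ∑ i, (β i ^ 2 / l i + l i)} with hS
  have hSne : ∀ β, (S β).Nonempty := by
    intro β
    obtain ⟨l, hl⟩ := hne
    exact ⟨_, l, hl, rfl⟩
  have hlow : ∀ β, ∀ t ∈ S β, ∑ i, |β i| ≤ t := by
    rintro β t ⟨l, hl, rfl⟩
    have : ∑ i, |β i| = (1/2) * ∑ i, 2 * |β i| := by
      rw [Finset.mul_sum]; apply Finset.sum_congr rfl; intros; ring
    rw [this]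
    gcongr with i
    exact key_amgm _ _ (hpos l hl i)
  have hbdd : ∀ β, BddBelow (S β) := fun β => ⟨_, hlow β⟩
  have habs : ∀ β, ∑ i, |β i| ≤ Omega Λ β := fun β => le_csInf (hSne β) (hlow β)
  have hnonneg : ∀ β, 0 ≤ Omega Λ β := by
    intro β
    refine le_trans ?_ (habs β)
    positivity
  have hzero : Omega Λ 0 = 0 := by
    refine le_antisymm ?_ (hnonneg 0)
    refine le_of_forall_pos_le_add ?_
    intro ε hε
    obtain ⟨l, hl⟩ := hne
    set s := ∑ i, l i with hs
    have hs0 : 0 ≤ s := Finset.sum_nonneg fun i _ => (hpos l hl i).le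
    have ht : (0:ℝ) < ε / (s + 1) := by positivity
    have hmem : (1/2 : ℝ) * ∑ i, ((0:Fin n → ℝ) i ^ 2 / ((ε/(s+1)) • l) i + ((ε/(s+1)) • l) i)
        ∈ S 0 := ⟨_, hcone l hl _ ht, rfl⟩
    have hle := csInf_le (hbdd 0) hmem
    refine hle.trans ?_
    have heq : (1/2 : ℝ) * ∑ i, ((0:Fin n → ℝ) i ^ 2 / ((ε/(s+1)) • l) i + ((ε/(s+1)) • l) i)
        = (1/2) * ((ε / (s+1)) * s) := by
      have hterm : ∀ i : Fin n,
          (0:Fin n → ℝ) i ^ 2 / ((ε/(s+1)) • l) i + ((ε/(s+1)) • l) i = (ε/(s+1)) * l i := by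
        intro i; simp [Pi.smul_apply]
      rw [Finset.sum_congr rfl fun i _ => hterm i, ← Finset.mul_sum]
    rw [heq]
    have hy : (ε/(s+1)) * s ≤ ε := by
      rw [div_mul_eq_mul_div, div_le_iff₀ (by positivity)]
      nlinarith
    have hx : 0 ≤ (ε/(s+1)) * s := by positivity
    linarith
  refine ⟨hnonneg, ?_, ?_, ?_⟩
  · intro β
    constructor
    · intro h
      funext i
      by_contra hb
      have h1 : 0 < |β i| := abs_pos.mpr hb
      have h2 : |β i| ≤ ∑ j, |β j| :=
        Finset.single_le_sum (f := fun j => |β j|) (fun j _ => abs_nonneg _)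
          (Finset.mem_univ i)
      have h3 := habs β
      rw [h] at h3
      linarith
    · rintro rfl; exact hzero
  · intro c β
    rcases eq_or_ne c 0 with rfl | hc
    · simp [hzero]
    · have hcpos : 0 < |c| := abs_pos.mpr hc
      have hset : S (c • β) = |c| • S β := by
        ext t
        simp only [Set.mem_smul_set, hS, Set.mem_setOf_eq]
        constructor
        · rintro ⟨l, hl, rfl⟩
          refine ⟨(1/2) * ∑ i, (β i ^ 2 / (|c|⁻¹ • l) i + (|c|⁻¹ • l) i),
            ⟨_, hcone l hl _ (by positivity), rfl⟩, ?_⟩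
          simp only [smul_eq_mul, Finset.mul_sum]
          apply Finset.sum_congr rfl; intro i _
          simp only [Pi.smul_apply, smul_eq_mul]
          linarith [term_fwd c (β i) (l i) hc (hpos l hl i)]
        · rintro ⟨t', ⟨l, hl, rfl⟩, rfl⟩
          refine ⟨|c| • l, hcone l hl _ hcpos, ?_⟩
          simp only [smul_eq_mul, Finset.mul_sum]
          apply Finset.sum_congr rfl; intro i _
          simp only [Pi.smul_apply, smul_eq_mul]
          linarith [term_bwd c (β i) (l i) hc (hpos l hl i)]
      show sInf (S (c • β)) = |c| * sInf (S β)
      rw [hset, Real.sInf_smul_of_nonneg hcpos.le, smul_eq_mul]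
  · intro β γ
    refine le_of_forall_pos_le_add ?_
    intro ε hε
    obtain ⟨a, ⟨l, hl, rfl⟩, ha⟩ := Real.lt_sInf_add_pos (hSne β) (half_pos hε)
    obtain ⟨b, ⟨m, hm, rfl⟩, hb⟩ := Real.lt_sInf_add_pos (hSne γ) (half_pos hε)
    have hlm : l + m ∈ Λ := by
      have hmid : ((1:ℝ)/2) • l + ((1:ℝ)/2) • m ∈ Λ :=
        hconv hl hm (by norm_num) (by norm_num) (by norm_num)
      have h2 := hcone _ hmid 2 (by norm_num)
      have heq : (2:ℝ) • (((1:ℝ)/2) • l + ((1:ℝ)/2) • m) = l + m := by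
        funext i; simp [Pi.smul_apply, smul_eq_mul]; ring
      rwa [heq] at h2
    have hmem : (1/2 : ℝ) * ∑ i, ((β + γ) i ^ 2 / (l + m) i + (l + m) i)
        ∈ S (β + γ) := ⟨_, hlm, rfl⟩
    have hle := csInf_le (hbdd (β + γ)) hmem
    have hkey : (1/2 : ℝ) * ∑ i, ((β + γ) i ^ 2 / (l + m) i + (l + m) i)
        ≤ (1/2) * ∑ i, (β i ^ 2 / l i + l i) + (1/2) * ∑ i, (γ i ^ 2 / m i + m i) := by
      rw [← mul_add, ← Finset.sum_add_distrib]
      refine mul_le_mul_of_nonneg_left (Finset.sum_le_sum ?_) (by norm_num)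
      intro i _
      have h1 := key_cs (β i) (γ i) (l i) (m i) (hpos l hl i) (hpos m hm i)
      simp only [Pi.add_apply]
      linarith
    have h2 : sInf (S β) = Omega Λ β := rfl
    have h3 : sInf (S γ) = Omega Λ γ := rfl
    have h4 : Omega Λ (β + γ) = sInf (S (β + γ)) := rfl
    rw [h4]
    rw [h2] at ha; rw [h3] at hb
    linarith
end

section
/- If Λ ⊆ (0,∞)ⁿ is a nonempty convex cone, then the dual norm of ‖·‖_Λ := Ω(·|Λ) is given by ‖β‖_{*,Λ} = sup{ sqrt( (Σᵢ λᵢ βᵢ²) / (Σᵢ λᵢ) ) : λ ∈ Λ }. -/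
/-- Core inequality: Cauchy–Schwarz + AM–GM. -/
lemma key_ineq (n : ℕ) (β u l : Fin n → ℝ) (hl : ∀ i, 0 < l i) :
    (∑ i, β i * u i) ≤
      Real.sqrt ((∑ i, l i * β i ^ 2) / (∑ i, l i)) *
        ((1/2) * ∑ i, (u i ^ 2 / l i + l i)) := by
  rcases Nat.eq_zero_or_pos n with hn | hn
  · subst hn; simp
  set A := ∑ i, l i * β i ^ 2 with hA
  set A' := ∑ i, u i ^ 2 / l i with hA'
  set B := ∑ i, l i with hB
  have hBpos : 0 < B := Finset.sum_pos (fun i _ => hl i) (by simp [Finset.univ_nonempty_iff, Fin.pos_iff_nonempty.mp hn])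
  have hAnn : 0 ≤ A := Finset.sum_nonneg fun i _ => mul_nonneg (hl i).le (sq_nonneg _)
  have hA'nn : 0 ≤ A' := Finset.sum_nonneg fun i _ => div_nonneg (sq_nonneg _) (hl i).le
  have hsplit : ∑ i, (u i ^ 2 / l i + l i) = A' + B := by
    rw [Finset.sum_add_distrib]
  have hCS : (∑ i, β i * u i) ≤ Real.sqrt A * Real.sqrt A' := by
    have := Real.sum_mul_le_sqrt_mul_sqrt Finset.univ
      (fun i => Real.sqrt (l i) * β i) (fun i => u i / Real.sqrt (l i))
    have h1 : ∀ i : Fin n, (Real.sqrt (l i) * β i) * (u i / Real.sqrt (l i)) = β i * u i := by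
      intro i
      have : Real.sqrt (l i) ≠ 0 := ne_of_gt (Real.sqrt_pos.mpr (hl i))
      field_simp
    have h2 : ∀ i : Fin n, (Real.sqrt (l i) * β i) ^ 2 = l i * β i ^ 2 := by
      intro i
      rw [mul_pow, Real.sq_sqrt (hl i).le]
    have h3 : ∀ i : Fin n, (u i / Real.sqrt (l i)) ^ 2 = u i ^ 2 / l i := by
      intro i
      rw [div_pow, Real.sq_sqrt (hl i).le]
    simpa [h1, h2, h3, ← hA, ← hA'] using this
  have hAM : Real.sqrt A * Real.sqrt A' ≤ Real.sqrt (A / B) * ((A' + B) / 2) := by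
    have e1 : Real.sqrt A = Real.sqrt (A / B) * Real.sqrt B := by
      rw [← Real.sqrt_mul (by positivity), div_mul_cancel₀ _ hBpos.ne']
    rw [e1, mul_assoc]
    refine mul_le_mul_of_nonneg_left ?_ (Real.sqrt_nonneg _)
    calc Real.sqrt B * Real.sqrt A' = Real.sqrt (B * A') := (Real.sqrt_mul hBpos.le _).symm
      _ ≤ Real.sqrt (((A' + B) / 2) ^ 2) := Real.sqrt_le_sqrt (by nlinarith [sq_nonneg (A' - B)])
      _ = (A' + B) / 2 := Real.sqrt_sq (by positivity)
  calc (∑ i, β i * u i) ≤ Real.sqrt A * Real.sqrt A' := hCS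
    _ ≤ Real.sqrt (A / B) * ((A' + B) / 2) := hAM
    _ = Real.sqrt (A / B) * ((1/2) * ∑ i, (u i ^ 2 / l i + l i)) := by rw [hsplit]; ring

theorem stmt_6 (n : ℕ) (Λ : Set (Fin n → ℝ)) (hne : Λ.Nonempty)
    (hpos : ∀ l ∈ Λ, ∀ i, 0 < l i) (hconv : Convex ℝ Λ)
    (hcone : ∀ l ∈ Λ, ∀ t : ℝ, 0 < t → t • l ∈ Λ)
    (β : Fin n → ℝ) :
    sSup {t : ℝ | ∃ u : Fin n → ℝ, Omega Λ u ≤ 1 ∧ t = ∑ i, β i * u i} =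
      sSup {t : ℝ | ∃ l ∈ Λ,
        t = Real.sqrt ((∑ i, l i * β i ^ 2) / (∑ i, l i))} := by
  classical
  obtain ⟨l₀, hl₀⟩ := hne
  set S1 := {t : ℝ | ∃ u : Fin n → ℝ, Omega Λ u ≤ 1 ∧ t = ∑ i, β i * u i} with hS1def
  set S2 := {t : ℝ | ∃ l ∈ Λ,
      t = Real.sqrt ((∑ i, l i * β i ^ 2) / (∑ i, l i))} with hS2def
  set C := Real.sqrt (∑ i, β i ^ 2) with hCdef
  have hCnn : 0 ≤ C := Real.sqrt_nonneg _
  -- upper bound on elements of S2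
  have hS2ub : ∀ l ∈ Λ, Real.sqrt ((∑ i, l i * β i ^ 2) / (∑ i, l i)) ≤ C := by
    intro l hl
    apply Real.sqrt_le_sqrt
    have hB : 0 ≤ ∑ i, l i := Finset.sum_nonneg fun i _ => (hpos l hl i).le
    rcases hB.eq_or_lt with hB0 | hBpos
    · rw [← hB0, div_zero]
      exact Finset.sum_nonneg fun i _ => sq_nonneg _
    · rw [div_le_iff₀ hBpos, Finset.sum_mul]
      refine Finset.sum_le_sum fun i _ => ?_
      have hli : l i ≤ ∑ j, l j :=
        Finset.single_le_sum (fun j _ => (hpos l hl j).le) (Finset.mem_univ i)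
      calc l i * β i ^ 2 = β i ^ 2 * l i := by ring
        _ ≤ β i ^ 2 * ∑ j, l j := mul_le_mul_of_nonneg_left hli (sq_nonneg _)
  have hS2ne : S2.Nonempty := ⟨_, l₀, hl₀, rfl⟩
  have hS2bdd : BddAbove S2 := ⟨C, by rintro t ⟨l, hl, rfl⟩; exact hS2ub l hl⟩
  have hM0 : 0 ≤ sSup S2 :=
    (Real.sqrt_nonneg _).trans (le_csSup hS2bdd ⟨l₀, hl₀, rfl⟩)
  -- Omega is at most each candidate value
  have hΩle : ∀ (u : Fin n → ℝ) (l : Fin n → ℝ), l ∈ Λ →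
      Omega Λ u ≤ (1/2) * ∑ i, (u i ^ 2 / l i + l i) := by
    intro u l hl
    refine csInf_le ⟨0, ?_⟩ ⟨l, hl, rfl⟩
    rintro t ⟨m, hm, rfl⟩
    exact mul_nonneg (by norm_num) (Finset.sum_nonneg fun i _ =>
      add_nonneg (div_nonneg (sq_nonneg _) (hpos m hm i).le) (hpos m hm i).le)
  -- generic upper bound for dual elements
  have hub : ∀ (u : Fin n → ℝ), Omega Λ u ≤ 1 → ∀ M : ℝ, 0 ≤ M →
      (∀ l ∈ Λ, Real.sqrt ((∑ i, l i * β i ^ 2) / (∑ i, l i)) ≤ M) →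
      ∀ ε : ℝ, 0 < ε → (∑ i, β i * u i) ≤ M * (1 + ε) := by
    intro u hΩ M hM hMub ε hε
    have hne' : {t : ℝ | ∃ l ∈ Λ, t = (1/2) * ∑ i, (u i ^ 2 / l i + l i)}.Nonempty :=
      ⟨_, l₀, hl₀, rfl⟩
    have hlt : sInf {t : ℝ | ∃ l ∈ Λ, t = (1/2) * ∑ i, (u i ^ 2 / l i + l i)} < 1 + ε := by
      have h := lt_of_le_of_lt hΩ (show (1:ℝ) < 1 + ε by linarith)
      simpa [Omega] using h
    obtain ⟨t, ⟨l, hl, rfl⟩, hlt'⟩ := exists_lt_of_csInf_lt hne' hlt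
    have hD0 : 0 ≤ (1/2) * ∑ i, (u i ^ 2 / l i + l i) :=
      mul_nonneg (by norm_num) (Finset.sum_nonneg fun i _ =>
        add_nonneg (div_nonneg (sq_nonneg _) (hpos l hl i).le) (hpos l hl i).le)
    calc (∑ i, β i * u i)
        ≤ Real.sqrt ((∑ i, l i * β i ^ 2) / (∑ i, l i)) *
          ((1/2) * ∑ i, (u i ^ 2 / l i + l i)) := key_ineq n β u l (hpos l hl)
      _ ≤ M * (1 + ε) := mul_le_mul (hMub l hl) hlt'.le hD0 hM
  have hS1bdd : BddAbove S1 := by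
    refine ⟨C * 2, ?_⟩
    rintro t ⟨u, hΩ, rfl⟩
    have := hub u hΩ C hCnn hS2ub 1 one_pos
    linarith
  -- 0 ∈ S1
  have h0S1 : (0:ℝ) ∈ S1 := by
    refine ⟨0, ?_, by simp⟩
    set B₀ := ∑ i, l₀ i with hB₀
    have hB₀nn : 0 ≤ B₀ := Finset.sum_nonneg fun i _ => (hpos l₀ hl₀ i).le
    have ht : (0:ℝ) < 1 / (B₀ + 1) := by positivity
    have hμ : (1 / (B₀ + 1)) • l₀ ∈ Λ := hcone l₀ hl₀ _ ht
    have h := hΩle 0 _ hμ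
    simp only [Pi.zero_apply] at h
    have hval : (1/2) * ∑ i, ((0:ℝ) ^ 2 / ((1 / (B₀ + 1)) • l₀) i + ((1 / (B₀ + 1)) • l₀) i)
        = (1/2) * (B₀ / (B₀ + 1)) := by
      simp only [Pi.smul_apply, smul_eq_mul, ne_eq, zero_pow, zero_div, zero_add,
        OfNat.ofNat_ne_zero, not_false_eq_true]
      rw [← Finset.mul_sum, ← hB₀]
      ring
    rw [hval] at h
    have hle : B₀ / (B₀ + 1) ≤ 1 := by
      rw [div_le_one (by linarith)]; linarith
    linarith
  have hS1sup0 : 0 ≤ sSup S1 := le_csSup hS1bdd h0S1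
  apply le_antisymm
  · -- sSup S1 ≤ sSup S2
    refine Real.sSup_le ?_ hM0
    rintro x ⟨u, hΩ, rfl⟩
    refine le_of_forall_pos_le_add ?_
    intro ε hε
    set M := sSup S2 with hM
    have hMub : ∀ l ∈ Λ, Real.sqrt ((∑ i, l i * β i ^ 2) / (∑ i, l i)) ≤ M :=
      fun l hl => le_csSup hS2bdd ⟨l, hl, rfl⟩
    have hM1 : (0:ℝ) < M + 1 := by linarith
    have h := hub u hΩ M hM0 hMub (ε / (M + 1)) (by positivity)
    have h2 : M * (ε / (M + 1)) ≤ ε := by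
      rw [mul_div_assoc', div_le_iff₀ hM1]
      nlinarith
    nlinarith
  · -- sSup S2 ≤ sSup S1
    refine Real.sSup_le ?_ hS1sup0
    rintro x ⟨l, hl, rfl⟩
    rcases Nat.eq_zero_or_pos n with hn | hn
    · subst hn
      simpa using hS1sup0
    set A := ∑ i, l i * β i ^ 2 with hAdef
    set B := ∑ i, l i with hBdef
    have hBpos : 0 < B := Finset.sum_pos (fun i _ => hpos l hl i)
      (by simp [Finset.univ_nonempty_iff, Fin.pos_iff_nonempty.mp hn])
    have hAnn : 0 ≤ A := Finset.sum_nonneg fun i _ => mul_nonneg (hpos l hl i).le (sq_nonneg _)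
    rcases hAnn.eq_or_lt with hA0 | hApos
    · rw [← hA0, zero_div, Real.sqrt_zero]
      exact hS1sup0
    · set s := Real.sqrt (A * B) with hs
      have hspos : 0 < s := Real.sqrt_pos.mpr (mul_pos hApos hBpos)
      have hs2 : s ^ 2 = A * B := Real.sq_sqrt (mul_pos hApos hBpos).le
      set u : Fin n → ℝ := fun i => l i * β i / s with hu
      have hsum : (∑ i, β i * u i) = A / s := by
        rw [hAdef, Finset.sum_div]
        refine Finset.sum_congr rfl fun i _ => ?_
        rw [hu]; ring
      have hAs : A / s = Real.sqrt (A / B) := by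
        rw [eq_comm, eq_div_iff hspos.ne', hs,
          ← Real.sqrt_mul (div_nonneg hApos.le hBpos.le),
          show A / B * (A * B) = A ^ 2 by field_simp,
          Real.sqrt_sq hApos.le]
      have hμ : (1 / B) • l ∈ Λ := hcone l hl _ (by positivity)
      have hΩu : Omega Λ u ≤ 1 := by
        have h := hΩle u _ hμ
        have hterm : ∀ i : Fin n, u i ^ 2 / ((1 / B) • l) i = l i * β i ^ 2 / A := by
          intro i
          have hli := hpos l hl i
          simp only [Pi.smul_apply, smul_eq_mul, hu]
          rw [div_pow, hs2]
          field_simp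
        have hcalc : (1/2) * ∑ i, (u i ^ 2 / ((1 / B) • l) i + ((1 / B) • l) i) = 1 := by
          rw [Finset.sum_add_distrib]
          have e1 : ∑ i, u i ^ 2 / ((1 / B) • l) i = 1 := by
            rw [Finset.sum_congr rfl fun i _ => hterm i, ← Finset.sum_div, ← hAdef,
              div_self hApos.ne']
          have e2 : ∑ i, ((1 / B) • l) i = 1 := by
            simp only [Pi.smul_apply, smul_eq_mul]
            rw [← Finset.mul_sum, ← hBdef]
            field_simp
          rw [e1, e2]; norm_num
        rw [hcalc] at h
        exact h
      have hmem : Real.sqrt (A / B) ∈ S1 := ⟨u, hΩu, by rw [hsum, hAs]⟩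
      exact le_csSup hS1bdd hmem
end

section
/- For a single variable: if 0 < a ≤ b and β ∈ ℝ, then inf{ (1/2)(β²/λ + λ) : λ ∈ [a,b] } = |β| + (1/(2a)) (a − |β|)₊² + (1/(2b)) (|β| − b)₊², where t₊ = max(t,0). -/
lemma aux_mono (c l β : ℝ) (hc : 0 < c) (hl : 0 < l)
    (hsign : 0 ≤ (l - c) * (l * c - β ^ 2)) :
    (1/2) * (β ^ 2 / c + c) ≤ (1/2) * (β ^ 2 / l + l) := by
  have h1 : β ^ 2 / c + c ≤ β ^ 2 / l + l := by
    rw [div_add' _ _ _ hc.ne', div_add' _ _ _ hl.ne', div_le_div_iff₀ hc hl]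
    nlinarith
  linarith

lemma aux_inf (a b β c : ℝ) (hc : c ∈ Set.Icc a b)
    (hkey : ∀ l ∈ Set.Icc a b, (1/2) * (β ^ 2 / c + c) ≤ (1/2) * (β ^ 2 / l + l)) :
    sInf {t : ℝ | ∃ l ∈ Set.Icc a b, t = (1/2) * (β ^ 2 / l + l)} =
      (1/2) * (β ^ 2 / c + c) := by
  apply le_antisymm
  · exact csInf_le ⟨_, fun t ⟨l, hl, ht⟩ => ht ▸ hkey l hl⟩ ⟨c, hc, rfl⟩
  · exact le_csInf ⟨_, c, hc, rfl⟩ (fun t ⟨l, hl, ht⟩ => ht ▸ hkey l hl)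

theorem stmt_8 (a b β : ℝ) (ha : 0 < a) (hab : a ≤ b) :
    sInf {t : ℝ | ∃ l ∈ Set.Icc a b, t = (1/2) * (β ^ 2 / l + l)} =
      |β| + (1 / (2 * a)) * (max (a - |β|) 0) ^ 2 +
        (1 / (2 * b)) * (max (|β| - b) 0) ^ 2 := by
  have hb : 0 < b := lt_of_lt_of_le ha hab
  have habs : 0 ≤ |β| := abs_nonneg β
  have hb2 : β ^ 2 = |β| ^ 2 := (sq_abs β).symm
  rcases le_total |β| a with h1 | h1
  · -- min at a
    rw [aux_inf a b β a ⟨le_refl a, hab⟩ ?_]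
    · rw [max_eq_left (by linarith), max_eq_right (by linarith)]
      field_simp
      nlinarith [sq_abs β]
    · intro l hl
      have hl0 : 0 < l := lt_of_lt_of_le ha hl.1
      apply aux_mono _ _ _ ha hl0
      have : β ^ 2 ≤ l * a := by nlinarith [sq_abs β, hl.1]
      nlinarith [hl.1]
  · rcases le_total |β| b with h2 | h2
    · -- min at |β|
      have habs0 : 0 < |β| := lt_of_lt_of_le ha h1
      rw [aux_inf a b β |β| ⟨h1, h2⟩ ?_]
      · rw [max_eq_right (by linarith), max_eq_right (by linarith)]
        field_simp
        rw [hb2]; ring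
      · intro l hl
        have hl0 : 0 < l := lt_of_lt_of_le ha hl.1
        apply aux_mono _ _ _ habs0 hl0
        have : (l - |β|) * (l * |β| - β ^ 2) = |β| * (l - |β|) ^ 2 := by
          rw [hb2]; ring
        rw [this]
        positivity
    · -- min at b
      rw [aux_inf a b β b ⟨hab, le_refl b⟩ ?_]
      · rw [max_eq_right (by linarith), max_eq_left (by linarith)]
        field_simp
        nlinarith [sq_abs β]
      · intro l hl
        have hl0 : 0 < l := lt_of_lt_of_le ha hl.1
        apply aux_mono _ _ _ hb hl0
        have : l * b ≤ β ^ 2 := by nlinarith [sq_abs β, hl.2]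
        nlinarith [hl.2]
end

section
/- For the n-dimensional box B[a,b] = Πᵢ [aᵢ,bᵢ] with 0 < aᵢ ≤ bᵢ, one has Ω(β|B[a,b]) = ‖β‖₁ + Σᵢ [ (1/(2aᵢ))(aᵢ − |βᵢ|)₊² + (1/(2bᵢ))(|βᵢ| − bᵢ)₊² ] for every β ∈ ℝⁿ. -/
private lemma coord_lb (a b c l : ℝ) (ha : 0 < a) (hab : a ≤ b) (hc : 0 ≤ c)
    (hla : a ≤ l) (hlb : l ≤ b) :
    c + ((1 / (2 * a)) * (max (a - c) 0) ^ 2 + (1 / (2 * b)) * (max (c - b) 0) ^ 2)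
      ≤ (1/2) * (c ^ 2 / l + l) := by
  have hl0 : 0 < l := lt_of_lt_of_le ha hla
  have hb0 : 0 < b := lt_of_lt_of_le ha hab
  have hrw : (1/2) * (c ^ 2 / l + l) = (c ^ 2 + l ^ 2) / (2 * l) := by
    field_simp
  rw [hrw, le_div_iff₀ (by linarith : (0:ℝ) < 2 * l)]
  rcases le_or_gt c a with h1 | h1
  · have hm1 : max (a - c) 0 = a - c := max_eq_left (by linarith)
    have hm2 : max (c - b) 0 = 0 := max_eq_right (by linarith)
    rw [hm1, hm2]
    have key : 0 ≤ (l - a) * (a * l - c ^ 2) := by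
      apply mul_nonneg (by linarith)
      nlinarith
    have ha' : a ≠ 0 := ne_of_gt ha
    field_simp
    nlinarith [mul_nonneg hb0.le key]
  rcases le_or_gt b c with h2 | h2
  · have hm1 : max (a - c) 0 = 0 := max_eq_right (by linarith)
    have hm2 : max (c - b) 0 = c - b := max_eq_left (by linarith)
    rw [hm1, hm2]
    have key : 0 ≤ (l - b) * (b * l - c ^ 2) := by
      have h3 : l - b ≤ 0 := by linarith
      have h4 : b * l - c ^ 2 ≤ 0 := by nlinarith
      nlinarith
    field_simp
    nlinarith [mul_nonneg ha.le key]
  · have hm1 : max (a - c) 0 = 0 := max_eq_right (by linarith)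
    have hm2 : max (c - b) 0 = 0 := max_eq_right (by linarith)
    rw [hm1, hm2]
    nlinarith [sq_nonneg (c - l)]

private lemma coord_eq (a b c : ℝ) (ha : 0 < a) (hab : a ≤ b) (hc : 0 ≤ c) :
    ∃ l, a ≤ l ∧ l ≤ b ∧
      (1/2) * (c ^ 2 / l + l) =
        c + ((1 / (2 * a)) * (max (a - c) 0) ^ 2 + (1 / (2 * b)) * (max (c - b) 0) ^ 2) := by
  have hb0 : 0 < b := lt_of_lt_of_le ha hab
  rcases le_or_gt c a with h1 | h1
  · refine ⟨a, le_refl a, hab, ?_⟩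
    rw [max_eq_left (by linarith), max_eq_right (by linarith)]
    field_simp
    ring
  rcases le_or_gt b c with h2 | h2
  · refine ⟨b, hab, le_refl b, ?_⟩
    rw [max_eq_right (by linarith), max_eq_left (by linarith)]
    field_simp
    ring
  · refine ⟨c, le_of_lt h1, le_of_lt h2, ?_⟩
    have hc0 : c ≠ 0 := ne_of_gt (lt_trans ha h1)
    rw [max_eq_right (by linarith), max_eq_right (by linarith)]
    field_simp
    ring

theorem stmt_10 (n : ℕ) (a b : Fin n → ℝ) (ha : ∀ i, 0 < a i) (hab : ∀ i, a i ≤ b i)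
    (β : Fin n → ℝ) :
    sInf {t : ℝ | ∃ l : Fin n → ℝ, (∀ i, l i ∈ Set.Icc (a i) (b i)) ∧
        t = (1/2) * ∑ i, (β i ^ 2 / l i + l i)} =
      (∑ i, |β i|) + ∑ i, ((1 / (2 * a i)) * (max (a i - |β i|) 0) ^ 2 +
        (1 / (2 * b i)) * (max (|β i| - b i) 0) ^ 2) := by
  set F : ℝ := (∑ i, |β i|) + ∑ i, ((1 / (2 * a i)) * (max (a i - |β i|) 0) ^ 2 +
        (1 / (2 * b i)) * (max (|β i| - b i) 0) ^ 2) with hF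
  have hFsum : F = ∑ i, (|β i| + ((1 / (2 * a i)) * (max (a i - |β i|) 0) ^ 2 +
        (1 / (2 * b i)) * (max (|β i| - b i) 0) ^ 2)) := by
    rw [hF, ← Finset.sum_add_distrib]
  -- choose optimal l
  choose l hl1 hl2 hl3 using fun i => coord_eq (a i) (b i) |β i| (ha i) (hab i) (abs_nonneg _)
  have hmem : F ∈ {t : ℝ | ∃ l : Fin n → ℝ, (∀ i, l i ∈ Set.Icc (a i) (b i)) ∧
        t = (1/2) * ∑ i, (β i ^ 2 / l i + l i)} := by
    refine ⟨l, fun i => ⟨hl1 i, hl2 i⟩, ?_⟩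
    rw [hFsum, Finset.mul_sum]
    refine Finset.sum_congr rfl fun i _ => ?_
    rw [← hl3 i, sq_abs]
  have hlb : ∀ t ∈ {t : ℝ | ∃ l : Fin n → ℝ, (∀ i, l i ∈ Set.Icc (a i) (b i)) ∧
        t = (1/2) * ∑ i, (β i ^ 2 / l i + l i)}, F ≤ t := by
    rintro t ⟨m, hm, rfl⟩
    rw [hFsum, Finset.mul_sum]
    refine Finset.sum_le_sum fun i _ => ?_
    have := coord_lb (a i) (b i) |β i| (m i) (ha i) (hab i) (abs_nonneg _)
      (hm i).1 (hm i).2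
    rwa [sq_abs] at this
  exact le_antisymm (csInf_le ⟨F, hlb⟩ hmem) (le_csInf ⟨F, hmem⟩ hlb)
end

section
/- For n = 2 and the wedge W = {λ ∈ (0,∞)² : λ₁ ≥ λ₂}: Ω(β|W) = |β₁| + |β₂| if |β₁| > |β₂|, and Ω(β|W) = √2 · sqrt(β₁² + β₂²) if |β₁| ≤ |β₂|, for every β ∈ (ℝ\{0})². -/
lemma recip_ineq (c l : ℝ) (hc : 0 < c) (hl : 0 < l) : 2/c - l/c^2 ≤ 1/l := by
  rw [div_sub_div _ _ hc.ne' (by positivity), div_le_div_iff₀ (by positivity) hl]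
  nlinarith [sq_nonneg (l - c), hc.le]

lemma amgm_aux (x l : ℝ) (hl : 0 < l) : 2*|x| ≤ x^2/l + l := by
  have h : (x^2/l) * l = x^2 := div_mul_cancel₀ _ hl.ne'
  nlinarith [sq_nonneg (|x| - l), hl, sq_abs x]

theorem stmt_11 (β : Fin 2 → ℝ) (hβ : ∀ i, β i ≠ 0) :
    sInf {t : ℝ | ∃ l : Fin 2 → ℝ, (∀ i, 0 < l i) ∧ l 1 ≤ l 0 ∧
        t = (1/2) * ∑ i, (β i ^ 2 / l i + l i)} =
      if |β 1| < |β 0| then |β 0| + |β 1|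
      else Real.sqrt 2 * Real.sqrt (β 0 ^ 2 + β 1 ^ 2) := by
  have hb0 := hβ 0
  have hb1 := hβ 1
  have hbdd : BddBelow {t : ℝ | ∃ l : Fin 2 → ℝ, (∀ i, 0 < l i) ∧ l 1 ≤ l 0 ∧
      t = (1/2) * ∑ i, (β i ^ 2 / l i + l i)} := by
    refine ⟨0, ?_⟩
    rintro t ⟨l, hl, -, rfl⟩
    have : 0 ≤ ∑ i, (β i ^ 2 / l i + l i) :=
      Finset.sum_nonneg fun i _ => by have := hl i; positivity
    linarith
  rcases lt_or_ge (|β 1|) (|β 0|) with h | h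
  · rw [if_pos h]
    apply le_antisymm
    · apply csInf_le hbdd
      refine ⟨fun i => |β i|, fun i => abs_pos.2 (hβ i), h.le, ?_⟩
      have e0 : β 0 ^ 2 / |β 0| = |β 0| := by
        rw [← sq_abs, sq, mul_div_assoc, div_self (abs_ne_zero.2 hb0), mul_one]
      have e1 : β 1 ^ 2 / |β 1| = |β 1| := by
        rw [← sq_abs, sq, mul_div_assoc, div_self (abs_ne_zero.2 hb1), mul_one]
      rw [Fin.sum_univ_two, e0, e1]; ring
    · apply le_csInf
      · refine ⟨_, fun i => |β i|, fun i => abs_pos.2 (hβ i), h.le, rfl⟩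
      · rintro t ⟨l, hl, -, rfl⟩
        rw [Fin.sum_univ_two]
        have a0 := amgm_aux (β 0) (l 0) (hl 0)
        have a1 := amgm_aux (β 1) (l 1) (hl 1)
        linarith
  · rw [if_neg (not_lt.2 h)]
    set s : ℝ := β 0 ^ 2 + β 1 ^ 2 with hs_def
    have hs : 0 < s := by positivity
    set c : ℝ := Real.sqrt (s/2) with hc_def
    have hc : 0 < c := Real.sqrt_pos.2 (by positivity)
    have hc2 : c ^ 2 = s / 2 := Real.sq_sqrt (by positivity)
    have htarget : Real.sqrt 2 * Real.sqrt s = 2 * c := by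
      rw [hc_def, ← Real.sqrt_mul (by norm_num) s,
        show (2:ℝ) * s = 4 * (s/2) by ring,
        Real.sqrt_mul (by norm_num : (0:ℝ) ≤ 4),
        show (4:ℝ) = 2^2 by norm_num, Real.sqrt_sq (by norm_num)]
    rw [htarget]
    have hsq : β 0 ^ 2 ≤ β 1 ^ 2 := by
      rw [← sq_abs (β 0), ← sq_abs (β 1)]
      exact pow_le_pow_left₀ (abs_nonneg _) h 2
    apply le_antisymm
    · apply csInf_le hbdd
      refine ⟨fun _ => c, fun _ => hc, le_refl c, ?_⟩
      rw [Fin.sum_univ_two]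
      have e : β 0 ^ 2 / c + β 1 ^ 2 / c = 2 * c := by
        rw [← add_div]
        rw [show β 0 ^ 2 + β 1 ^ 2 = 2 * c^2 by rw [hc2]; ring]
        rw [sq]; field_simp
      field_simp
      linarith [e]
    · apply le_csInf
      · exact ⟨_, fun _ => c, fun _ => hc, le_refl c, rfl⟩
      · rintro t ⟨l, hl, hle, rfl⟩
        rw [Fin.sum_univ_two]
        have r0 := mul_le_mul_of_nonneg_left (recip_ineq c (l 0) hc (hl 0)) (sq_nonneg (β 0))
        have r1 := mul_le_mul_of_nonneg_left (recip_ineq c (l 1) hc (hl 1)) (sq_nonneg (β 1))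
        rw [mul_one_div] at r0 r1
        have hmain : 4*c ≤ β 0 ^2 * (2/c - l 0/c^2) + β 1 ^2 * (2/c - l 1/c^2) + l 0 + l 1 := by
          have e2 : ∀ x : ℝ, (2:ℝ)/c - x/c^2 = (2*c - x)/c^2 := by
            intro x; field_simp
          rw [e2, e2, ← mul_div_assoc, ← mul_div_assoc, ← add_div, ← sub_le_iff_le_add, ← sub_le_iff_le_add,
            le_div_iff₀ (by positivity : (0:ℝ) < c^2)]
          rw [hc2]
          nlinarith [mul_nonneg (sub_nonneg.2 hle) (sub_nonneg.2 hsq)]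
        linarith
end

section
/- Call a vector β ∈ ℝⁿ admissible if ‖β_{|{1,…,k}}‖₂²/k ≤ ‖β‖₂²/n for every k ∈ {1,…,n}. If β ∈ ℝⁿ and δ ∈ ℝᵖ are admissible and ‖β‖₂²/n ≤ ‖δ‖₂²/p, then the concatenated vector (β,δ) ∈ ℝ^{n+p} is admissible. -/
theorem stmt_18 (n p : ℕ) (hn : 0 < n) (hp : 0 < p)
    (β : Fin n → ℝ) (δ : Fin p → ℝ)
    (hβ : ∀ k : ℕ, 1 ≤ k → k ≤ n →
      (∑ j ∈ Finset.univ.filter (fun j : Fin n => (j : ℕ) < k), β j ^ 2) / (k : ℝ) ≤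
        (∑ j, β j ^ 2) / (n : ℝ))
    (hδ : ∀ k : ℕ, 1 ≤ k → k ≤ p →
      (∑ j ∈ Finset.univ.filter (fun j : Fin p => (j : ℕ) < k), δ j ^ 2) / (k : ℝ) ≤
        (∑ j, δ j ^ 2) / (p : ℝ))
    (hord : (∑ j, β j ^ 2) / (n : ℝ) ≤ (∑ j, δ j ^ 2) / (p : ℝ)) :
    ∀ k : ℕ, 1 ≤ k → k ≤ n + p →
      (∑ j ∈ Finset.univ.filter (fun j : Fin (n + p) => (j : ℕ) < k),
          (Fin.append β δ j) ^ 2) / (k : ℝ) ≤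
        (∑ j, (Fin.append β δ j) ^ 2) / ((n + p : ℕ) : ℝ) := by
  intro k hk1 hk2
  set A := ∑ j, β j ^ 2 with hA
  set B := ∑ j, δ j ^ 2 with hB
  have hA0 : 0 ≤ A := Finset.sum_nonneg fun j _ => sq_nonneg _
  have hB0 : 0 ≤ B := Finset.sum_nonneg fun j _ => sq_nonneg _
  have hn' : (0:ℝ) < n := by exact_mod_cast hn
  have hp' : (0:ℝ) < p := by exact_mod_cast hp
  have hnp' : (0:ℝ) < n + p := by positivity
  have hApBn : A * p ≤ B * n := by
    rw [div_le_div_iff₀ hn' hp'] at hord; linarith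
  have htot : (∑ j, (Fin.append β δ j) ^ 2) = A + B := by
    rw [Fin.sum_univ_add]
    simp [hA, hB, Fin.append_left, Fin.append_right]
  rw [htot]
  -- split the filtered sum
  have hsplit : (∑ j ∈ Finset.univ.filter (fun j : Fin (n + p) => (j : ℕ) < k),
      (Fin.append β δ j) ^ 2)
      = (∑ i : Fin n, if (i : ℕ) < k then β i ^ 2 else 0)
      + (∑ i : Fin p, if n + (i : ℕ) < k then δ i ^ 2 else 0) := by
    rw [Finset.sum_filter, Fin.sum_univ_add]
    congr 1
    · apply Finset.sum_congr rfl; intro i _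
      simp [Fin.append_left]
    · apply Finset.sum_congr rfl; intro i _
      simp [Fin.append_right]
  rw [hsplit]
  have hkR : (0:ℝ) < k := by exact_mod_cast hk1
  by_cases hkn : k ≤ n
  · -- first block only
    have h2 : (∑ i : Fin p, if n + (i : ℕ) < k then δ i ^ 2 else 0) = 0 := by
      apply Finset.sum_eq_zero; intro i _
      rw [if_neg]; omega
    have h1 : (∑ i : Fin n, if (i : ℕ) < k then β i ^ 2 else 0)
        = ∑ j ∈ Finset.univ.filter (fun j : Fin n => (j : ℕ) < k), β j ^ 2 := by
      rw [Finset.sum_filter]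
    rw [h1, h2, add_zero]
    have hc : ((n + p : ℕ) : ℝ) = (n:ℝ) + p := by push_cast; ring
    rw [hc]
    have hβk := hβ k hk1 hkn
    have hstep : A / n ≤ (A + B) / (n + p) := by
      rw [div_le_div_iff₀ hn' hnp']
      nlinarith
    exact le_trans hβk hstep
  · push_neg at hkn
    obtain ⟨m, rfl⟩ : ∃ m, k = n + m := ⟨k - n, by omega⟩
    have hm1 : 1 ≤ m := by omega
    have hmp : m ≤ p := by omega
    have h1 : (∑ i : Fin n, if (i : ℕ) < n + m then β i ^ 2 else 0) = A := by
      rw [hA]; apply Finset.sum_congr rfl; intro i _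
      rw [if_pos]; omega
    have h2 : (∑ i : Fin p, if n + (i : ℕ) < n + m then δ i ^ 2 else 0)
        = ∑ j ∈ Finset.univ.filter (fun j : Fin p => (j : ℕ) < m), δ j ^ 2 := by
      rw [Finset.sum_filter]
      apply Finset.sum_congr rfl; intro i _
      congr 1; simp
    rw [h1, h2]
    set S := ∑ j ∈ Finset.univ.filter (fun j : Fin p => (j : ℕ) < m), δ j ^ 2 with hS
    have hδm := hδ m hm1 hmp
    have hm' : (0:ℝ) < m := by exact_mod_cast hm1
    have hSle : S ≤ m * B / p := by
      rw [div_le_div_iff₀ hm' hp'] at hδm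
      rw [le_div_iff₀ hp']; linarith
    have hmp' : (m:ℝ) ≤ p := by exact_mod_cast hmp
    have hcast : ((n + m : ℕ) : ℝ) = (n:ℝ) + m := by push_cast; ring
    have hc : ((n + p : ℕ) : ℝ) = (n:ℝ) + p := by push_cast; ring
    rw [hcast, hc, div_le_div_iff₀ (by positivity) hnp']
    have key : (A + m * B / p) * ((n:ℝ) + p) ≤ (A + B) * ((n:ℝ) + m) := by
      have h : ((A + B) * ((n:ℝ) + m) - (A + m * B / p) * ((n:ℝ) + p)) * p
          = (B * n - A * p) * ((p:ℝ) - m) := by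
        field_simp; ring
      have h2 : (0:ℝ) ≤ (B * n - A * p) * ((p:ℝ) - m) :=
        mul_nonneg (by linarith) (by linarith)
      nlinarith [h, h2, hp']
    calc (A + S) * ((n:ℝ) + p) ≤ (A + m * B / p) * ((n:ℝ) + p) := by
          apply mul_le_mul_of_nonneg_right (by linarith) (le_of_lt hnp')
      _ ≤ (A + B) * ((n:ℝ) + m) := key
end

section
/- Let n ≥ 1, μ = ‖β‖₂/√n for a nonzero β ∈ ℝⁿ, and define α_q = q − (Σ_{j≤q} β_j²)/μ² for q ∈ {1,…,n−1}, with α₀ = α_n = 0. Then λ = (μ,…,μ) and α satisfy the KKT conditions −β_j²/λ_j² + 1 + α_{j−1} − α_j = 0 for all j ∈ {1,…,n}, and α_q ≥ 0 for all q if and only if Σ_{j≤q} β_j²/q ≤ ‖β‖₂²/n for all q ∈ {1,…,n−1}. Consequently, if the latter condition holds, then inf{(1/2) Σⱼ (βⱼ²/λⱼ + λⱼ) : λ ∈ (0,∞)ⁿ, λ₁ ≥ λ₂ ≥ … ≥ λₙ} = √n ‖β‖₂. -/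
lemma abel_identity (C L : ℕ → ℝ) (n : ℕ) :
    ∑ j ∈ Finset.range n, (C (j+1) - C j) * L j
      = C n * L n - C 0 * L 0 - ∑ q ∈ Finset.range n, C (q+1) * (L (q+1) - L q) := by
  induction n with
  | zero => simp
  | succ n ih => rw [Finset.sum_range_succ, Finset.sum_range_succ, ih]; ring

lemma abel_nonneg (c L : ℕ → ℝ) (n : ℕ)
    (hC : ∀ q, 1 ≤ q → q ≤ n - 1 → 0 ≤ ∑ j ∈ Finset.range q, c j)
    (hCn : ∑ j ∈ Finset.range n, c j = 0)
    (hL : ∀ i, L (i+1) ≤ L i) :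
    0 ≤ ∑ j ∈ Finset.range n, c j * L j := by
  have hc : ∀ j, c j = (∑ k ∈ Finset.range (j+1), c k) - (∑ k ∈ Finset.range j, c k) := by
    intro j; rw [Finset.sum_range_succ]; ring
  have hid := abel_identity (fun q => ∑ k ∈ Finset.range q, c k) L n
  have this1 : ∑ j ∈ Finset.range n, c j * L j
      = ∑ j ∈ Finset.range n, ((∑ k ∈ Finset.range (j+1), c k)
          - ∑ k ∈ Finset.range j, c k) * L j := by
    refine Finset.sum_congr rfl fun j _ => ?_
    rw [← hc]
  rw [this1, hid, hCn]
  simp only [Finset.range_zero, Finset.sum_empty, zero_mul, sub_zero, zero_sub, sub_self]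
  rw [← Finset.sum_neg_distrib]
  refine Finset.sum_nonneg fun q hq => ?_
  simp only [Finset.mem_range] at hq
  have h1 : 0 ≤ ∑ k ∈ Finset.range (q+1), c k := by
    rcases eq_or_lt_of_le (Nat.succ_le_of_lt hq) with h | h
    · rw [show q + 1 = n from h, hCn]
    · exact hC (q+1) (Nat.le_add_left 1 q) (by omega)
  nlinarith [hL q]

lemma conv_ineq (b μ l : ℝ) (hμ : 0 < μ) (hl : 0 < l) :
    b^2/μ + μ + (1 - b^2/μ^2) * (l - μ) ≤ b^2/l + l := by
  have key : b^2/l + l - (b^2/μ + μ + (1 - b^2/μ^2)*(l-μ)) = b^2 * (l-μ)^2/(l*μ^2) := by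
    field_simp; ring
  nlinarith [div_nonneg (mul_nonneg (sq_nonneg b) (sq_nonneg (l-μ)))
    (le_of_lt (mul_pos hl (pow_pos hμ 2)))]

theorem stmt_19 (n : ℕ) (hn : 1 ≤ n) (β : Fin n → ℝ) (hβ : β ≠ 0) :
    let μ : ℝ := Real.sqrt (∑ j, β j ^ 2) / Real.sqrt n
    let α : ℕ → ℝ := fun q =>
      (q : ℝ) - (∑ j ∈ Finset.univ.filter (fun j : Fin n => (j : ℕ) < q), β j ^ 2) / μ ^ 2
    (∀ j : Fin n, -(β j ^ 2) / μ ^ 2 + 1 + α (j : ℕ) - α ((j : ℕ) + 1) = 0) ∧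
    (α 0 = 0 ∧ α n = 0) ∧
    ((∀ q : ℕ, 1 ≤ q → q ≤ n - 1 → 0 ≤ α q) ↔
      (∀ q : ℕ, 1 ≤ q → q ≤ n - 1 →
        (∑ j ∈ Finset.univ.filter (fun j : Fin n => (j : ℕ) < q), β j ^ 2) / (q : ℝ) ≤
          (∑ j, β j ^ 2) / (n : ℝ))) ∧
    ((∀ q : ℕ, 1 ≤ q → q ≤ n - 1 →
        (∑ j ∈ Finset.univ.filter (fun j : Fin n => (j : ℕ) < q), β j ^ 2) / (q : ℝ) ≤
          (∑ j, β j ^ 2) / (n : ℝ)) →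
      sInf {t : ℝ | ∃ l : Fin n → ℝ, (∀ i, 0 < l i) ∧
          (∀ i j : Fin n, i ≤ j → l j ≤ l i) ∧
          t = (1/2) * ∑ j, (β j ^ 2 / l j + l j)} =
        Real.sqrt n * Real.sqrt (∑ j, β j ^ 2)) := by
  intro μ α
  set S : ℝ := ∑ j, β j ^ 2 with hSdef
  have hS : 0 < S := by
    obtain ⟨j, hj⟩ : ∃ j, β j ≠ 0 := by
      by_contra h; push_neg at h; exact hβ (funext h)
    exact Finset.sum_pos' (fun i _ => sq_nonneg _) ⟨j, Finset.mem_univ j, by positivity⟩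
  have hn0 : (0:ℝ) < n := by exact_mod_cast hn
  have hμ : 0 < μ := div_pos (Real.sqrt_pos.2 hS) (Real.sqrt_pos.2 hn0)
  have hμ2 : μ ^ 2 = S / n := by
    show (Real.sqrt S / Real.sqrt n)^2 = S/n
    rw [div_pow, Real.sq_sqrt hS.le, Real.sq_sqrt hn0.le]
  have hμ2pos : 0 < μ ^ 2 := by positivity
  set b : ℕ → ℝ := fun k => if h : k < n then β ⟨k, h⟩ ^ 2 else 0 with hbdef
  have hb : ∀ (j : Fin n), b (j : ℕ) = β j ^ 2 := by
    intro j; simp [hbdef, j.isLt]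
  have hbz : ∀ k, n ≤ k → b k = 0 := by
    intro k hk; simp [hbdef]; omega
  have hP : ∀ q : ℕ, (∑ j ∈ Finset.univ.filter (fun j : Fin n => (j : ℕ) < q), β j ^ 2)
      = ∑ k ∈ Finset.range q, b k := by
    intro q
    rw [Finset.sum_filter]
    have e0 : ∀ j : Fin n, (if (j:ℕ) < q then β j ^ 2 else 0)
        = (fun k => if k < q then b k else 0) (j : ℕ) := by
      intro j; simp only []; rw [hb]
    rw [Finset.sum_congr rfl (fun j _ => e0 j),
      Fin.sum_univ_eq_sum_range (fun k => if k < q then b k else 0) n]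
    have e1 : ∑ k ∈ Finset.range n, (if k < q then b k else 0)
        = ∑ k ∈ Finset.range (max n q), (if k < q then b k else 0) := by
      refine Finset.sum_subset (Finset.range_subset_range.2 (le_max_left _ _)) ?_
      intro x hx hxn
      simp only [Finset.mem_range] at hx hxn
      split
      · exact hbz x (by omega)
      · rfl
    have e2 : ∑ k ∈ Finset.range q, b k
        = ∑ k ∈ Finset.range (max n q), (if k < q then b k else 0) := by
      rw [Finset.sum_ite, Finset.sum_const_zero, add_zero]
      refine (Finset.sum_congr ?_ fun _ _ => rfl).symm
      ext k; simp only [Finset.mem_filter, Finset.mem_range]; omega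
    rw [e1, ← e2]
  have hα : ∀ q : ℕ, α q = (q : ℝ) - (∑ k ∈ Finset.range q, b k) / μ ^ 2 := by
    intro q
    show (q : ℝ) - _ / μ ^ 2 = _
    rw [hP]
  have hCn : ∑ k ∈ Finset.range n, b k = S := by
    rw [← hP n, Finset.filter_true_of_mem (fun j _ => j.isLt)]
  have hα0 : α 0 = 0 := by rw [hα]; simp
  have hαn : α n = 0 := by
    rw [hα, hCn, hμ2]
    field_simp
    simp
  have hequiv : ∀ q : ℕ, 1 ≤ q → q ≤ n - 1 →
      (0 ≤ α q ↔ (∑ j ∈ Finset.univ.filter (fun j : Fin n => (j : ℕ) < q), β j ^ 2) / (q : ℝ)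
        ≤ S / n) := by
    intro q h1 h2
    have hq0 : (0:ℝ) < q := by exact_mod_cast h1
    rw [hα, hP, sub_nonneg, div_le_iff₀ hμ2pos, hμ2, div_le_div_iff₀ hq0 hn0]
    have e : (q:ℝ) * (S / n) * n = S * q := by field_simp
    constructor
    · intro h
      have h' := mul_le_mul_of_nonneg_right h hn0.le
      linarith
    · intro h
      have h' : (∑ k ∈ Finset.range q, b k) ≤ S * q / n := (le_div_iff₀ hn0).mpr h
      have e' : S * (q:ℝ) / n = (q:ℝ) * (S / n) := by ring
      linarith
  refine ⟨?_, ⟨hα0, hαn⟩, ?_, ?_⟩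
  · -- KKT
    intro j
    have h1 : ∑ k ∈ Finset.range ((j:ℕ)+1), b k
        = (∑ k ∈ Finset.range (j:ℕ), b k) + β j ^ 2 := by
      rw [Finset.sum_range_succ, hb]
    rw [hα, hα, h1]
    push_cast
    field_simp
    ring
  · exact ⟨fun h q a c => (hequiv q a c).1 (h q a c),
      fun h q a c => (hequiv q a c).2 (h q a c)⟩
  · intro hcond
    -- value computations
    have hsn : (0:ℝ) < Real.sqrt n := Real.sqrt_pos.2 hn0
    have hsS : (0:ℝ) < Real.sqrt S := Real.sqrt_pos.2 hS
    have hval : S / μ + n * μ = 2 * (Real.sqrt n * Real.sqrt S) := by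
      show S / (Real.sqrt S / Real.sqrt n) + n * (Real.sqrt S / Real.sqrt n) = _
      rw [div_div_eq_mul_div]
      have h1 : S * Real.sqrt n / Real.sqrt S = Real.sqrt n * Real.sqrt S := by
        rw [mul_comm, mul_div_assoc, Real.div_sqrt]
      have h2 : (n:ℝ) * (Real.sqrt S / Real.sqrt n) = Real.sqrt n * Real.sqrt S := by
        have : (n:ℝ) * (Real.sqrt S / Real.sqrt n) = Real.sqrt S * ((n:ℝ) / Real.sqrt n) := by
          ring
        rw [this, Real.div_sqrt, mul_comm]
      rw [h1, h2]; ring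
    have hsumμ : ∑ j, (β j ^ 2 / μ + μ) = S / μ + n * μ := by
      rw [Finset.sum_add_distrib, ← Finset.sum_div, Finset.sum_const, Finset.card_univ,
        Fintype.card_fin, nsmul_eq_mul, ← hSdef]
    have hmem : Real.sqrt n * Real.sqrt S ∈ {t : ℝ | ∃ l : Fin n → ℝ, (∀ i, 0 < l i) ∧
        (∀ i j : Fin n, i ≤ j → l j ≤ l i) ∧
        t = (1/2) * ∑ j, (β j ^ 2 / l j + l j)} := by
      refine ⟨fun _ => μ, fun i => hμ, fun i j _ => le_rfl, ?_⟩
      rw [hsumμ, hval]; ring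
    have hlow : ∀ t ∈ {t : ℝ | ∃ l : Fin n → ℝ, (∀ i, 0 < l i) ∧
        (∀ i j : Fin n, i ≤ j → l j ≤ l i) ∧
        t = (1/2) * ∑ j, (β j ^ 2 / l j + l j)},
        Real.sqrt n * Real.sqrt S ≤ t := by
      rintro t ⟨l, hl, hmono, rfl⟩
      set L : ℕ → ℝ := fun k => l ⟨min k (n-1), by omega⟩ with hLdef
      have hLmono : ∀ i, L (i+1) ≤ L i := by
        intro i
        exact hmono _ _ (by simp only [Fin.mk_le_mk]; omega)
      set c : ℕ → ℝ := fun k => if k < n then 1 - b k / μ ^ 2 else 0 with hcdef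
      have hCq : ∀ q, q ≤ n → ∑ k ∈ Finset.range q, c k = α q := by
        intro q hq
        rw [hα]
        have : ∀ k ∈ Finset.range q, c k = 1 - b k / μ ^ 2 := by
          intro k hk; simp only [Finset.mem_range] at hk
          simp only [hcdef]; rw [if_pos (by omega)]
        rw [Finset.sum_congr rfl this, Finset.sum_sub_distrib, Finset.sum_const,
          Finset.card_range, nsmul_eq_mul, mul_one, ← Finset.sum_div]
      have hsum0 : ∑ k ∈ Finset.range n, c k = 0 := by rw [hCq n le_rfl, hαn]
      have hCpos : ∀ q, 1 ≤ q → q ≤ n - 1 → 0 ≤ ∑ k ∈ Finset.range q, c k := by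
        intro q a cq
        rw [hCq q (by omega)]
        exact (hequiv q a cq).2 (hcond q a cq)
      have key := abel_nonneg c (fun k => L k - μ) n hCpos hsum0
        (fun i => by simpa using sub_le_sub_right (hLmono i) μ)
      have hsum_eq : ∑ j : Fin n, (1 - β j ^ 2 / μ ^ 2) * (l j - μ)
          = ∑ k ∈ Finset.range n, c k * (L k - μ) := by
        rw [← Fin.sum_univ_eq_sum_range (fun k => c k * (L k - μ)) n]
        refine Finset.sum_congr rfl fun j _ => ?_
        have hc : c (j:ℕ) = 1 - β j ^ 2 / μ ^ 2 := by
          simp only [hcdef]; rw [if_pos j.isLt, hb]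
        have hLj : L (j:ℕ) = l j := by
          simp only [hLdef]
          congr 1
          exact Fin.ext (by simp; omega)
        rw [hc, hLj]
      have habel : 0 ≤ ∑ j : Fin n, (1 - β j ^ 2 / μ ^ 2) * (l j - μ) := by
        rw [hsum_eq]; exact key
      have hconv : ∑ j, (β j ^ 2 / μ + μ + (1 - β j ^ 2 / μ ^ 2) * (l j - μ))
          ≤ ∑ j, (β j ^ 2 / l j + l j) :=
        Finset.sum_le_sum fun j _ => conv_ineq (β j) μ (l j) hμ (hl j)
      have hsplit : ∑ j, (β j ^ 2 / μ + μ + (1 - β j ^ 2 / μ ^ 2) * (l j - μ))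
          = (S / μ + n * μ) + ∑ j : Fin n, (1 - β j ^ 2 / μ ^ 2) * (l j - μ) := by
        rw [← hsumμ, ← Finset.sum_add_distrib]
      have : 2 * (Real.sqrt n * Real.sqrt S) ≤ ∑ j, (β j ^ 2 / l j + l j) := by
        calc 2 * (Real.sqrt n * Real.sqrt S) = S / μ + n * μ := hval.symm
          _ ≤ (S / μ + n * μ) + ∑ j : Fin n, (1 - β j ^ 2 / μ ^ 2) * (l j - μ) := by
              linarith
          _ = ∑ j, (β j ^ 2 / μ + μ + (1 - β j ^ 2 / μ ^ 2) * (l j - μ)) := hsplit.symm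
          _ ≤ _ := hconv
      linarith
    exact le_antisymm (csInf_le ⟨_, hlow⟩ hmem) (le_csInf ⟨_, hmem⟩ hlow)
end
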